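/- In the saddle-point setting, with the block-diagonal preconditioner M_D = [[F, 0],[0, H2]] and H = blockdiag(H1, H2), the preconditioned matrix satisfies ‖M_D⁻¹K‖_H ≤ 1 + 2C₁. -/

import Mathlib

open Matrix

/-- The `H`-norm of a vector: `‖u‖_H = (uᵀ H u)^{1/2}`. -/
noncomputable def vnorm {α : Type*} [Fintype α] (H : Matrix α α ℝ) (u : α → ℝ) : ℝ :=
  Real.sqrt (u ⬝ᵥ (H *ᵥ u))

/-- The weighted operator norm `‖M‖_{H1,H2} = sup_{v ≠ 0} ‖M v‖_{H2} / ‖v‖_{H1}`.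
For a square matrix, `‖M‖_H = wnorm H H M`; the spectral norm is `wnorm 1 1 M`. -/
noncomputable def wnorm {α β : Type*} [Fintype α] [Fintype β]
    (H1 : Matrix α α ℝ) (H2 : Matrix β β ℝ) (M : Matrix β α ℝ) : ℝ :=
  sSup {r : ℝ | ∃ v : α → ℝ, v ≠ 0 ∧ r = vnorm H2 (M *ᵥ v) / vnorm H1 v}

set_option linter.unusedSectionVars false

section Aux

variable {α : Type*} [Fintype α] [DecidableEq α]

lemma vnorm_nonneg (H : Matrix α α ℝ) (u : α → ℝ) : 0 ≤ vnorm H u := Real.sqrt_nonneg _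

lemma quad_nonneg {H : Matrix α α ℝ} (hH : H.PosDef) (u : α → ℝ) : 0 ≤ u ⬝ᵥ (H *ᵥ u) := by
  by_cases hu : u = 0
  · simp [hu]
  · have := hH.dotProduct_mulVec_pos hu
    simpa using this.le

lemma vnorm_sq {H : Matrix α α ℝ} (hH : H.PosDef) (u : α → ℝ) :
    vnorm H u ^ 2 = u ⬝ᵥ (H *ᵥ u) := Real.sq_sqrt (quad_nonneg hH u)

lemma vnorm_pos {H : Matrix α α ℝ} (hH : H.PosDef) {u : α → ℝ} (hu : u ≠ 0) :
    0 < vnorm H u := by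
  apply Real.sqrt_pos.2
  have := hH.dotProduct_mulVec_pos hu
  simpa using this

lemma transpose_eq_of_posdef {H : Matrix α α ℝ} (hH : H.PosDef) : Hᵀ = H := hH.1

lemma quad_symm {H : Matrix α α ℝ} (hH : H.PosDef) (u v : α → ℝ) :
    v ⬝ᵥ (H *ᵥ u) = u ⬝ᵥ (H *ᵥ v) := by
  rw [dotProduct_mulVec u, ← vecMul_transpose, transpose_eq_of_posdef hH, dotProduct_comm]

lemma cs {H : Matrix α α ℝ} (hH : H.PosDef) (u v : α → ℝ) :
    u ⬝ᵥ (H *ᵥ v) ≤ vnorm H u * vnorm H v := by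
  by_cases hv : v = 0
  · simp [hv, vnorm]
  set a := u ⬝ᵥ (H *ᵥ u) with ha
  set b := u ⬝ᵥ (H *ᵥ v) with hb
  set c := v ⬝ᵥ (H *ᵥ v) with hc
  have hcpos : 0 < c := by have := hH.dotProduct_mulVec_pos hv; simpa using this
  have key : ∀ t : ℝ, 0 ≤ c * (t * t) + (-2 * b) * t + a := by
    intro t
    have h0 := quad_nonneg hH (u - t • v)
    have hsym := quad_symm hH u v
    simp only [sub_dotProduct, dotProduct_sub, mulVec_sub, mulVec_smul, smul_dotProduct,
      dotProduct_smul, smul_eq_mul] at h0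
    rw [hsym] at h0
    nlinarith [h0]
  have hd := discrim_le_zero key
  rw [discrim] at hd
  have hb2 : b ^ 2 ≤ a * c := by nlinarith [hd]
  have hanon : 0 ≤ a := quad_nonneg hH u
  calc b ≤ |b| := le_abs_self b
    _ = Real.sqrt (b ^ 2) := (Real.sqrt_sq_eq_abs b).symm
    _ ≤ Real.sqrt (a * c) := Real.sqrt_le_sqrt hb2
    _ = vnorm H u * vnorm H v := by rw [Real.sqrt_mul hanon]; rfl

lemma vnorm_triangle {H : Matrix α α ℝ} (hH : H.PosDef) (u v : α → ℝ) :
    vnorm H (u + v) ≤ vnorm H u + vnorm H v := by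
  have hcs := cs hH u v
  have hsym := quad_symm hH u v
  have h1 : (u + v) ⬝ᵥ (H *ᵥ (u + v)) = u ⬝ᵥ (H *ᵥ u) + 2 * (u ⬝ᵥ (H *ᵥ v)) + v ⬝ᵥ (H *ᵥ v) := by
    simp only [add_dotProduct, dotProduct_add, mulVec_add]
    rw [hsym]; ring
  have h2 : vnorm H (u + v) = Real.sqrt ((u + v) ⬝ᵥ (H *ᵥ (u + v))) := rfl
  rw [h2, h1]
  have hnn : 0 ≤ vnorm H u + vnorm H v := add_nonneg (vnorm_nonneg H u) (vnorm_nonneg H v)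
  rw [show vnorm H u + vnorm H v = Real.sqrt ((vnorm H u + vnorm H v) ^ 2) from
    (Real.sqrt_sq hnn).symm]
  apply Real.sqrt_le_sqrt
  have e1 := vnorm_sq hH u
  have e2 := vnorm_sq hH v
  nlinarith [hcs, vnorm_nonneg H u, vnorm_nonneg H v]

lemma mulVecInvRight {H : Matrix α α ℝ} (hH : H.PosDef) (w : α → ℝ) :
    H *ᵥ (H⁻¹ *ᵥ w) = w := by
  rw [mulVec_mulVec, mul_nonsing_inv _ (isUnit_iff_isUnit_det H |>.mp hH.isUnit), one_mulVec]

lemma vnorm_inv_mulVec {H : Matrix α α ℝ} (hH : H.PosDef) (w : α → ℝ) :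
    vnorm H (H⁻¹ *ᵥ w) = vnorm H⁻¹ w := by
  unfold vnorm
  congr 1
  rw [mulVecInvRight hH, dotProduct_comm]

lemma dual_cs {H : Matrix α α ℝ} (hH : H.PosDef) (x w : α → ℝ) :
    x ⬝ᵥ w ≤ vnorm H x * vnorm H⁻¹ w := by
  have h := cs hH x (H⁻¹ *ᵥ w)
  rw [mulVecInvRight hH, vnorm_inv_mulVec hH] at h
  exact h

/-- sum of absolute values of entries -/
noncomputable def absSum (H : Matrix α α ℝ) : ℝ := ∑ i, ∑ j, |H i j|

lemma quad_le_absSum (H : Matrix α α ℝ) (v : α → ℝ) :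
    v ⬝ᵥ (H *ᵥ v) ≤ absSum H * (v ⬝ᵥ v) := by
  have hsq : ∀ i, v i ^ 2 ≤ v ⬝ᵥ v := by
    intro i
    have : v ⬝ᵥ v = ∑ j, v j * v j := rfl
    rw [this]
    calc v i ^ 2 = v i * v i := sq (v i)
      _ ≤ ∑ j, v j * v j :=
        Finset.single_le_sum (fun j _ => mul_self_nonneg (v j)) (Finset.mem_univ i)
  have hdnn : (0:ℝ) ≤ v ⬝ᵥ v := Finset.sum_nonneg fun j _ => mul_self_nonneg (v j)
  have h1 : v ⬝ᵥ (H *ᵥ v) = ∑ i, ∑ j, v i * (H i j * v j) := by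
    simp [dotProduct, mulVec, Finset.mul_sum]
  rw [h1, absSum, Finset.sum_mul]
  apply Finset.sum_le_sum
  intro i _
  rw [Finset.sum_mul]
  apply Finset.sum_le_sum
  intro j _
  have habs : |v i * v j| ≤ v ⬝ᵥ v := by
    rw [abs_mul]
    nlinarith [hsq i, hsq j, abs_nonneg (v i), abs_nonneg (v j), sq_abs (v i), sq_abs (v j),
      sq_nonneg (|v i| - |v j|)]
  calc v i * (H i j * v j) = H i j * (v i * v j) := by ring
    _ ≤ |H i j * (v i * v j)| := le_abs_self _
    _ = |H i j| * |v i * v j| := abs_mul _ _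
    _ ≤ |H i j| * (v ⬝ᵥ v) := mul_le_mul_of_nonneg_left habs (abs_nonneg _)

/-- Euclidean norm -/
noncomputable def enorm (v : α → ℝ) : ℝ := Real.sqrt (v ⬝ᵥ v)

lemma enorm_nonneg (v : α → ℝ) : 0 ≤ _root_.enorm v := Real.sqrt_nonneg _

lemma dot_self_nonneg (v : α → ℝ) : (0:ℝ) ≤ v ⬝ᵥ v :=
  Finset.sum_nonneg fun j _ => mul_self_nonneg (v j)

lemma vnorm_le_enorm (H : Matrix α α ℝ) (v : α → ℝ) :
    vnorm H v ≤ Real.sqrt (absSum H) * _root_.enorm v := by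
  unfold vnorm _root_.enorm
  rw [← Real.sqrt_mul (by unfold absSum; positivity)]
  exact Real.sqrt_le_sqrt (quad_le_absSum H v)

lemma enorm_mulVec_le {β : Type*} [Fintype β] [DecidableEq β]
    (M : Matrix β α ℝ) (v : α → ℝ) :
    _root_.enorm (M *ᵥ v) ≤ Real.sqrt (absSum (Mᵀ * M)) * _root_.enorm v := by
  unfold _root_.enorm
  rw [← Real.sqrt_mul (by unfold absSum; positivity)]
  apply Real.sqrt_le_sqrt
  have h : (M *ᵥ v) ⬝ᵥ (M *ᵥ v) = v ⬝ᵥ ((Mᵀ * M) *ᵥ v) := by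
    rw [← mulVec_mulVec, dotProduct_mulVec v, vecMul_transpose]
  rw [h]
  exact quad_le_absSum (Mᵀ * M) v

lemma enorm_le_vnorm {H : Matrix α α ℝ} (hH : H.PosDef) (v : α → ℝ) :
    _root_.enorm v ≤ Real.sqrt (absSum H⁻¹) * vnorm H v := by
  by_cases he : _root_.enorm v = 0
  · rw [he]
    have := vnorm_nonneg H v
    positivity
  have hepos : 0 < _root_.enorm v := lt_of_le_of_ne (enorm_nonneg v) (Ne.symm he)
  have h1 : _root_.enorm v * _root_.enorm v = v ⬝ᵥ v := Real.mul_self_sqrt (dot_self_nonneg v)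
  have h2 : v ⬝ᵥ v ≤ vnorm H v * vnorm H⁻¹ v := dual_cs hH v v
  have h3 : vnorm H⁻¹ v ≤ Real.sqrt (absSum H⁻¹) * _root_.enorm v := vnorm_le_enorm H⁻¹ v
  have h4 : _root_.enorm v * _root_.enorm v ≤ (Real.sqrt (absSum H⁻¹) * vnorm H v) * _root_.enorm v := by
    rw [h1]
    calc v ⬝ᵥ v ≤ vnorm H v * vnorm H⁻¹ v := h2
      _ ≤ vnorm H v * (Real.sqrt (absSum H⁻¹) * _root_.enorm v) :=
          mul_le_mul_of_nonneg_left h3 (vnorm_nonneg H v)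
      _ = (Real.sqrt (absSum H⁻¹) * vnorm H v) * _root_.enorm v := by ring
  exact le_of_mul_le_mul_right h4 hepos

lemma wnormSet_bddAbove {β : Type*} [Fintype β] [DecidableEq β]
    {H1 : Matrix α α ℝ} {H2 : Matrix β β ℝ} (h1 : H1.PosDef) (h2 : H2.PosDef)
    (M : Matrix β α ℝ) :
    BddAbove {r : ℝ | ∃ v : α → ℝ, v ≠ 0 ∧ r = vnorm H2 (M *ᵥ v) / vnorm H1 v} := by
  refine ⟨Real.sqrt (absSum H2) * Real.sqrt (absSum (Mᵀ * M)) * Real.sqrt (absSum H1⁻¹), ?_⟩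
  rintro r ⟨v, hv, rfl⟩
  rw [div_le_iff₀ (vnorm_pos h1 hv)]
  calc vnorm H2 (M *ᵥ v) ≤ Real.sqrt (absSum H2) * _root_.enorm (M *ᵥ v) := vnorm_le_enorm H2 _
    _ ≤ Real.sqrt (absSum H2) * (Real.sqrt (absSum (Mᵀ * M)) * _root_.enorm v) :=
        mul_le_mul_of_nonneg_left (enorm_mulVec_le M v) (Real.sqrt_nonneg _)
    _ ≤ Real.sqrt (absSum H2) * (Real.sqrt (absSum (Mᵀ * M)) *
          (Real.sqrt (absSum H1⁻¹) * vnorm H1 v)) := by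
        apply mul_le_mul_of_nonneg_left _ (Real.sqrt_nonneg _)
        exact mul_le_mul_of_nonneg_left (enorm_le_vnorm h1 v) (Real.sqrt_nonneg _)
    _ = Real.sqrt (absSum H2) * Real.sqrt (absSum (Mᵀ * M)) * Real.sqrt (absSum H1⁻¹) *
          vnorm H1 v := by ring

lemma le_of_wnorm_le {β : Type*} [Fintype β] [DecidableEq β]
    {H1 : Matrix α α ℝ} {H2 : Matrix β β ℝ} (h1 : H1.PosDef) (h2 : H2.PosDef)
    {M : Matrix β α ℝ} {C : ℝ} (h : wnorm H1 H2 M ≤ C) (v : α → ℝ) :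
    vnorm H2 (M *ᵥ v) ≤ C * vnorm H1 v := by
  by_cases hv : v = 0
  · simp [hv, vnorm]
  have hmem : vnorm H2 (M *ᵥ v) / vnorm H1 v ∈
      {r : ℝ | ∃ v : α → ℝ, v ≠ 0 ∧ r = vnorm H2 (M *ᵥ v) / vnorm H1 v} := ⟨v, hv, rfl⟩
  have := le_csSup (wnormSet_bddAbove h1 h2 M) hmem
  have hle : vnorm H2 (M *ᵥ v) / vnorm H1 v ≤ C := le_trans this h
  rwa [div_le_iff₀ (vnorm_pos h1 hv)] at hle

end Aux

theorem stmt_12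
    {n m : ℕ} (F : Matrix (Fin n) (Fin n) ℝ) (B : Matrix (Fin m) (Fin n) ℝ)
    (H1 N : Matrix (Fin n) (Fin n) ℝ) (H2 : Matrix (Fin m) (Fin m) ℝ)
    (η C₁ C₂ : ℝ) (hη : 0 < η) (hC1 : 0 < C₁) (hC2 : 0 < C₂)
    (hH1 : H1 = ((1 : ℝ)/2) • (F + Fᵀ)) (hN : N = ((1 : ℝ)/2) • (F - Fᵀ))
    (hH1pd : H1.PosDef) (hH2pd : H2.PosDef)
    (hBrank : B.rank = m)
    (hNnorm : wnorm H1 H1⁻¹ N ≤ η)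
    (hBnorm : wnorm H1 H2⁻¹ B ≤ C₁)
    (hinfsup : ∀ x : Fin m → ℝ, x ≠ 0 → C₂ * vnorm H2 x ≤ vnorm H1⁻¹ (Bᵀ *ᵥ x))
    (K MD H : Matrix (Fin n ⊕ Fin m) (Fin n ⊕ Fin m) ℝ)
    (hK : K = fromBlocks F Bᵀ B 0)
    (hMD : MD = fromBlocks F 0 0 H2)
    (hH : H = fromBlocks H1 0 0 H2) :
    wnorm H H (MD⁻¹ * K) ≤ 1 + 2 * C₁ := by
  -- symmetric-part identity
  have hsymF : ∀ x : Fin n → ℝ, x ⬝ᵥ (H1 *ᵥ x) = x ⬝ᵥ (F *ᵥ x) := by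
    intro x
    have htr : x ⬝ᵥ (Fᵀ *ᵥ x) = x ⬝ᵥ (F *ᵥ x) := by
      rw [mulVec_transpose, dotProduct_comm, dotProduct_mulVec]
    rw [hH1]
    simp only [smul_mulVec, dotProduct_smul, add_mulVec, dotProduct_add, smul_eq_mul]
    rw [htr]; ring
  -- F is invertible
  have hFdet : IsUnit F.det := by
    rw [isUnit_iff_ne_zero]
    intro hdet
    obtain ⟨v, hv0, hv⟩ := (Matrix.exists_mulVec_eq_zero_iff).mpr hdet
    have h1 := hH1pd.dotProduct_mulVec_pos hv0
    simp only [star_trivial] at h1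
    rw [hsymF, hv, dotProduct_zero] at h1
    exact lt_irrefl 0 h1
  have hFinvF : F⁻¹ * F = 1 := nonsing_inv_mul F hFdet
  have hFFinv : F * F⁻¹ = 1 := mul_nonsing_inv F hFdet
  have hMDinv : MD⁻¹ = fromBlocks F⁻¹ 0 0 H2⁻¹ := by
    apply inv_eq_left_inv
    rw [hMD, fromBlocks_multiply]
    simp only [Matrix.mul_zero, Matrix.zero_mul, add_zero, zero_add, hFinvF,
      nonsing_inv_mul H2 (isUnit_iff_isUnit_det H2 |>.mp hH2pd.isUnit), fromBlocks_one]
  -- pointwise bound for B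
  have hBp : ∀ u : Fin n → ℝ, vnorm H2⁻¹ (B *ᵥ u) ≤ C₁ * vnorm H1 u :=
    fun u => le_of_wnorm_le hH1pd hH2pd.inv hBnorm u
  -- ‖F⁻¹ w‖_{H1} ≤ ‖w‖_{H1⁻¹}
  have hFinvBound : ∀ w : Fin n → ℝ, vnorm H1 (F⁻¹ *ᵥ w) ≤ vnorm H1⁻¹ w := by
    intro w
    set x := F⁻¹ *ᵥ w with hx
    by_cases hz : vnorm H1 x = 0
    · rw [hz]; exact vnorm_nonneg _ _
    have hpos : 0 < vnorm H1 x := lt_of_le_of_ne (vnorm_nonneg _ _) (Ne.symm hz)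
    have h2 : F *ᵥ x = w := by rw [hx, mulVec_mulVec, hFFinv, one_mulVec]
    have h3 : x ⬝ᵥ w ≤ vnorm H1 x * vnorm H1⁻¹ w := dual_cs hH1pd x w
    have h4 : vnorm H1 x * vnorm H1 x ≤ vnorm H1 x * vnorm H1⁻¹ w := by
      have h5 := vnorm_sq hH1pd x
      rw [hsymF, h2] at h5
      nlinarith [h3, h5]
    exact le_of_mul_le_mul_left h4 hpos
  -- ‖Bᵀ p‖_{H1⁻¹} ≤ C₁ ‖p‖_{H2}
  have hBTbound : ∀ p : Fin m → ℝ, vnorm H1⁻¹ (Bᵀ *ᵥ p) ≤ C₁ * vnorm H2 p := by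
    intro p
    set w := Bᵀ *ᵥ p with hw
    set u := H1⁻¹ *ᵥ w with hu
    by_cases hz : vnorm H1⁻¹ w = 0
    · rw [hz]; exact mul_nonneg hC1.le (vnorm_nonneg _ _)
    have hpos : 0 < vnorm H1⁻¹ w := lt_of_le_of_ne (vnorm_nonneg _ _) (Ne.symm hz)
    have h1 : vnorm H1⁻¹ w ^ 2 = w ⬝ᵥ (H1⁻¹ *ᵥ w) := vnorm_sq hH1pd.inv w
    have h2 : w ⬝ᵥ (H1⁻¹ *ᵥ w) = p ⬝ᵥ (B *ᵥ u) := by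
      rw [← hu, dotProduct_comm, hw, dotProduct_mulVec, vecMul_transpose, dotProduct_comm]
    have h3 : p ⬝ᵥ (B *ᵥ u) ≤ vnorm H2 p * vnorm H2⁻¹ (B *ᵥ u) := dual_cs hH2pd p _
    have h4 : vnorm H2⁻¹ (B *ᵥ u) ≤ C₁ * vnorm H1 u := hBp u
    have h5 : vnorm H1 u = vnorm H1⁻¹ w := vnorm_inv_mulVec hH1pd w
    have h6 : vnorm H1⁻¹ w * vnorm H1⁻¹ w ≤ (C₁ * vnorm H2 p) * vnorm H1⁻¹ w := by
      have h7 := mul_le_mul_of_nonneg_left h4 (vnorm_nonneg H2 p)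
      rw [h5] at h7
      calc vnorm H1⁻¹ w * vnorm H1⁻¹ w = vnorm H1⁻¹ w ^ 2 := (sq _).symm
        _ = w ⬝ᵥ (H1⁻¹ *ᵥ w) := h1
        _ = p ⬝ᵥ (B *ᵥ u) := h2
        _ ≤ vnorm H2 p * vnorm H2⁻¹ (B *ᵥ u) := h3
        _ ≤ vnorm H2 p * (C₁ * vnorm H1⁻¹ w) := h7
        _ = (C₁ * vnorm H2 p) * vnorm H1⁻¹ w := by ring
    exact le_of_mul_le_mul_right h6 hpos
  -- vnorm of H on sum-decomposed vectors
  have hVn : ∀ (x : Fin n → ℝ) (y : Fin m → ℝ),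
      vnorm H (Sum.elim x y) = Real.sqrt (x ⬝ᵥ (H1 *ᵥ x) + y ⬝ᵥ (H2 *ᵥ y)) := by
    intro x y
    unfold vnorm
    rw [hH, fromBlocks_mulVec]
    simp only [Sum.elim_comp_inl, Sum.elim_comp_inr, zero_mulVec, add_zero, zero_add]
    rw [sumElim_dotProduct_sumElim]
  -- conclude via sSup
  apply Real.sSup_le _ (by linarith)
  rintro r ⟨v, hv, rfl⟩
  set u := v ∘ Sum.inl with hu
  set p := v ∘ Sum.inr with hp
  have hveq : Sum.elim u p = v := Sum.elim_comp_inl_inr v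
  have hact : (MD⁻¹ * K) *ᵥ v = Sum.elim (u + F⁻¹ *ᵥ (Bᵀ *ᵥ p)) (H2⁻¹ *ᵥ (B *ᵥ u)) := by
    have h1 : K *ᵥ v = Sum.elim (F *ᵥ u + Bᵀ *ᵥ p) (B *ᵥ u) := by
      rw [hK, fromBlocks_mulVec]
      simp only [zero_mulVec, add_zero]
      rfl
    rw [← mulVec_mulVec, h1, hMDinv, fromBlocks_mulVec]
    simp only [Sum.elim_comp_inl, Sum.elim_comp_inr, zero_mulVec, add_zero, zero_add]
    congr 1
    rw [mulVec_add, mulVec_mulVec, mulVec_mulVec, hFinvF, one_mulVec]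
  have hden : 0 < vnorm H v := by
    rw [← hveq, hVn]
    apply Real.sqrt_pos.2
    have hor : u ≠ 0 ∨ p ≠ 0 := by
      by_contra hc
      push_neg at hc
      apply hv
      rw [← hveq, hc.1, hc.2]
      ext i; cases i <;> rfl
    rcases hor with h | h
    · have h1 : 0 < u ⬝ᵥ (H1 *ᵥ u) := by have := hH1pd.dotProduct_mulVec_pos h; simpa using this
      exact add_pos_of_pos_of_nonneg h1 (quad_nonneg hH2pd p)
    · have h1 : 0 < p ⬝ᵥ (H2 *ᵥ p) := by have := hH2pd.dotProduct_mulVec_pos h; simpa using this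
      exact add_pos_of_nonneg_of_pos (quad_nonneg hH1pd u) h1
  rw [div_le_iff₀ hden]
  -- the numerator estimate
  set a := vnorm H1 u with hA
  set b := vnorm H2 p with hB2
  have ha : 0 ≤ a := vnorm_nonneg _ _
  have hb : 0 ≤ b := vnorm_nonneg _ _
  have hX : vnorm H1 (u + F⁻¹ *ᵥ (Bᵀ *ᵥ p)) ≤ a + C₁ * b := by
    refine (vnorm_triangle hH1pd _ _).trans ?_
    have := (hFinvBound (Bᵀ *ᵥ p)).trans (hBTbound p)
    linarith
  have hY : vnorm H2 (H2⁻¹ *ᵥ (B *ᵥ u)) ≤ C₁ * a := by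
    rw [vnorm_inv_mulVec hH2pd]; exact hBp u
  rw [hact, hVn, ← hveq, hVn, ← vnorm_sq hH1pd, ← vnorm_sq hH2pd, ← vnorm_sq hH1pd,
    ← vnorm_sq hH2pd, ← hA, ← hB2]
  have hX2 : vnorm H1 (u + F⁻¹ *ᵥ (Bᵀ *ᵥ p)) ^ 2 ≤ (a + C₁ * b) ^ 2 :=
    pow_le_pow_left₀ (vnorm_nonneg _ _) hX 2
  have hY2 : vnorm H2 (H2⁻¹ *ᵥ (B *ᵥ u)) ^ 2 ≤ (C₁ * a) ^ 2 :=
    pow_le_pow_left₀ (vnorm_nonneg _ _) hY 2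
  calc Real.sqrt (vnorm H1 (u + F⁻¹ *ᵥ (Bᵀ *ᵥ p)) ^ 2 + vnorm H2 (H2⁻¹ *ᵥ (B *ᵥ u)) ^ 2)
      ≤ Real.sqrt ((1 + 2 * C₁) ^ 2 * (a ^ 2 + b ^ 2)) := by
        apply Real.sqrt_le_sqrt
        nlinarith [hX2, hY2, mul_nonneg hC1.le (sq_nonneg (a - b)), sq_nonneg a, sq_nonneg b,
          hC1.le, mul_nonneg (mul_nonneg hC1.le hC1.le) (sq_nonneg b), sq_nonneg (a - b)]
    _ = (1 + 2 * C₁) * Real.sqrt (a ^ 2 + b ^ 2) := by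
        rw [Real.sqrt_mul (sq_nonneg _), Real.sqrt_sq (by linarith)]
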